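/- If the approximate misfit Φ^a is in L¹_{μ_θ} and the joint misfit Φ^j is in L¹_{μ_θ⊗μ_δ}, then the joint posterior μ^j := (μ_θ⊗μ_δ)_{Φ^j} and the lifted approximate posterior μ^a_{θ,δ} := (μ_θ)_{Φ^a} ⊗ μ_δ satisfy max{ d_KL(μ^a_{θ,δ} ‖ μ^j), d_KL(μ^j ‖ μ^a_{θ,δ}) } ≤ C · ( ∫∫ |O(e(θ,w))|²_{Σ_η^{−1}} d(μ_θ⊗μ_δ)(θ,w) )^{1/2}, where C = 2^{1/2} · exp( 2‖Φ^j‖_{L¹_{μ_θ⊗μ_δ}} + 2‖Φ^a‖_{L¹_{μ_θ}} ) · ( ‖Φ^j‖_{L¹_{μ_θ⊗μ_δ}}^{1/2} + ‖Φ^a‖_{L¹_{μ_θ}}^{1/2} ). -/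

import Mathlib

open MeasureTheory Real Matrix ENNReal

open Classical in
/-- Kullback--Leibler divergence. -/
noncomputable def KLdiv {X : Type*} [MeasurableSpace X] (μ ν : Measure X) : ℝ≥0∞ :=
  if μ ≪ ν ∧ Integrable (fun x => Real.log ((μ.rnDeriv ν x).toReal)) μ
  then ENNReal.ofReal (∫ x, Real.log ((μ.rnDeriv ν x).toReal) ∂μ)
  else ⊤

/-- The posterior measure `μ_Φ` with density `exp (-Φ) / Z` w.r.t. `μ`. -/
noncomputable def posterior {X : Type*} [MeasurableSpace X] (μ : Measure X) (Φ : X → ℝ) :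
    Measure X :=
  μ.withDensity fun x => ENNReal.ofReal (Real.exp (-Φ x) / ∫ x', Real.exp (-Φ x') ∂μ)

set_option linter.unusedSectionVars false
set_option maxHeartbeats 1000000

lemma cont_q {n : ℕ} (A : Matrix (Fin n) (Fin n) ℝ) :
    Continuous fun v : Fin n → ℝ => v ⬝ᵥ A *ᵥ v := by
  simp only [dotProduct, Matrix.mulVec]
  exact continuous_finset_sum _ fun i _ =>
    (continuous_apply i).mul (continuous_finset_sum _ fun j _ =>
      (continuous_const.mul (continuous_apply j)))


section MatrixCS
variable {n : ℕ} (A : Matrix (Fin n) (Fin n) ℝ)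

lemma bil_symm (hA : A.PosSemidef) (u v : Fin n → ℝ) :
    u ⬝ᵥ A *ᵥ v = v ⬝ᵥ A *ᵥ u := by
  have hAt : Aᵀ = A := by
    have := hA.1
    rwa [Matrix.IsHermitian, Matrix.conjTranspose_eq_transpose_of_trivial] at this
  rw [Matrix.dotProduct_mulVec, ← Matrix.mulVec_transpose, hAt, dotProduct_comm]

lemma q_nonneg (hA : A.PosSemidef) (v : Fin n → ℝ) : 0 ≤ v ⬝ᵥ A *ᵥ v := by
  simpa using hA.dotProduct_mulVec_nonneg v

lemma q_expand (u v : Fin n → ℝ) :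
    (u + v) ⬝ᵥ A *ᵥ (u + v) = u ⬝ᵥ A *ᵥ u + u ⬝ᵥ A *ᵥ v + v ⬝ᵥ A *ᵥ u + v ⬝ᵥ A *ᵥ v := by
  rw [Matrix.mulVec_add, add_dotProduct, dotProduct_add, dotProduct_add]
  ring

lemma bil_CS (hA : A.PosSemidef) (u v : Fin n → ℝ) :
    |u ⬝ᵥ A *ᵥ v| ≤ Real.sqrt (u ⬝ᵥ A *ᵥ u) * Real.sqrt (v ⬝ᵥ A *ᵥ v) := by
  have key : ∀ t : ℝ, 0 ≤ (v ⬝ᵥ A *ᵥ v) * (t * t) + (2 * (u ⬝ᵥ A *ᵥ v)) * t + (u ⬝ᵥ A *ᵥ u) := by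
    intro t
    have h0 := q_nonneg A hA (u + t • v)
    have hsymm := bil_symm A hA u (t • v)
    rw [q_expand] at h0
    simp only [Matrix.mulVec_smul, dotProduct_smul, smul_dotProduct,
      smul_eq_mul] at h0 hsymm
    nlinarith [h0, hsymm]
  have hd := discrim_le_zero (a := v ⬝ᵥ A *ᵥ v) (b := 2 * (u ⬝ᵥ A *ᵥ v))
    (c := u ⬝ᵥ A *ᵥ u) key
  rw [discrim] at hd
  have hsq : (u ⬝ᵥ A *ᵥ v) ^ 2 ≤ (u ⬝ᵥ A *ᵥ u) * (v ⬝ᵥ A *ᵥ v) := by nlinarith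
  calc |u ⬝ᵥ A *ᵥ v| = Real.sqrt ((u ⬝ᵥ A *ᵥ v) ^ 2) := (Real.sqrt_sq_eq_abs _).symm
    _ ≤ Real.sqrt ((u ⬝ᵥ A *ᵥ u) * (v ⬝ᵥ A *ᵥ v)) := Real.sqrt_le_sqrt hsq
    _ = _ := Real.sqrt_mul (q_nonneg A hA u) _

lemma sqrt_q_add (hA : A.PosSemidef) (u v : Fin n → ℝ) :
    Real.sqrt ((u + v) ⬝ᵥ A *ᵥ (u + v)) ≤
      Real.sqrt (u ⬝ᵥ A *ᵥ u) + Real.sqrt (v ⬝ᵥ A *ᵥ v) := by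
  have h1 : (u + v) ⬝ᵥ A *ᵥ (u + v) ≤
      (Real.sqrt (u ⬝ᵥ A *ᵥ u) + Real.sqrt (v ⬝ᵥ A *ᵥ v)) ^ 2 := by
    rw [q_expand]
    have hs := bil_symm A hA u v
    have hcs := bil_CS A hA u v
    have h2 : u ⬝ᵥ A *ᵥ v ≤ Real.sqrt (u ⬝ᵥ A *ᵥ u) * Real.sqrt (v ⬝ᵥ A *ᵥ v) :=
      (le_abs_self _).trans hcs
    have e1 : Real.sqrt (u ⬝ᵥ A *ᵥ u) ^ 2 = u ⬝ᵥ A *ᵥ u := Real.sq_sqrt (q_nonneg A hA u)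
    have e2 : Real.sqrt (v ⬝ᵥ A *ᵥ v) ^ 2 = v ⬝ᵥ A *ᵥ v := Real.sq_sqrt (q_nonneg A hA v)
    nlinarith
  calc Real.sqrt ((u + v) ⬝ᵥ A *ᵥ (u + v)) ≤
      Real.sqrt ((Real.sqrt (u ⬝ᵥ A *ᵥ u) + Real.sqrt (v ⬝ᵥ A *ᵥ v)) ^ 2) :=
        Real.sqrt_le_sqrt h1
    _ = _ := Real.sqrt_sq (by positivity)

/-- key pointwise inequality -/
lemma key_pt (hA : A.PosSemidef) (a u : Fin n → ℝ) :
    |1/2 * ((a - u) ⬝ᵥ A *ᵥ (a - u)) - 1/2 * (a ⬝ᵥ A *ᵥ a)| ≤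
      1/2 * Real.sqrt (u ⬝ᵥ A *ᵥ u) *
        (Real.sqrt (a ⬝ᵥ A *ᵥ a) + Real.sqrt ((a - u) ⬝ᵥ A *ᵥ (a - u))) := by
  set b := a - u with hb
  have hdiff : b ⬝ᵥ A *ᵥ b - a ⬝ᵥ A *ᵥ a = (b - a) ⬝ᵥ A *ᵥ (b + a) := by
    have e : b ⬝ᵥ A *ᵥ b - a ⬝ᵥ A *ᵥ a
        = (b ⬝ᵥ A *ᵥ b + b ⬝ᵥ A *ᵥ a) - (a ⬝ᵥ A *ᵥ b + a ⬝ᵥ A *ᵥ a) := by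
      rw [bil_symm A hA b a]; ring
    rw [e]
    simp only [Matrix.mulVec_add, dotProduct_add, sub_dotProduct]
    ring
  have hba : b - a = -u := by rw [hb]; abel
  have hq : (b - a) ⬝ᵥ A *ᵥ (b - a) = u ⬝ᵥ A *ᵥ u := by
    rw [hba, neg_dotProduct, Matrix.mulVec_neg, dotProduct_neg, neg_neg]
  have h1 : |b ⬝ᵥ A *ᵥ b - a ⬝ᵥ A *ᵥ a| ≤
      Real.sqrt (u ⬝ᵥ A *ᵥ u) * Real.sqrt ((b + a) ⬝ᵥ A *ᵥ (b + a)) := by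
    rw [hdiff, ← hq]
    exact bil_CS A hA _ _
  have h2 : Real.sqrt ((b + a) ⬝ᵥ A *ᵥ (b + a)) ≤
      Real.sqrt (b ⬝ᵥ A *ᵥ b) + Real.sqrt (a ⬝ᵥ A *ᵥ a) := sqrt_q_add A hA b a
  have h3 : |1/2 * (b ⬝ᵥ A *ᵥ b) - 1/2 * (a ⬝ᵥ A *ᵥ a)|
      = 1/2 * |b ⬝ᵥ A *ᵥ b - a ⬝ᵥ A *ᵥ a| := by
    rw [show 1/2 * (b ⬝ᵥ A *ᵥ b) - 1/2 * (a ⬝ᵥ A *ᵥ a)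
        = 1/2 * (b ⬝ᵥ A *ᵥ b - a ⬝ᵥ A *ᵥ a) from by ring, abs_mul]
    norm_num
  rw [h3]
  have hs : 0 ≤ Real.sqrt (u ⬝ᵥ A *ᵥ u) := Real.sqrt_nonneg _
  nlinarith [h1, h2, mul_le_mul_of_nonneg_left h2 hs]

lemma q_sub_le (hA : A.PosSemidef) (u v : Fin n → ℝ) :
    (u - v) ⬝ᵥ A *ᵥ (u - v) ≤ 2 * (u ⬝ᵥ A *ᵥ u) + 2 * (v ⬝ᵥ A *ᵥ v) := by
  have h0 := q_nonneg A hA (u + v)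
  rw [q_expand] at h0
  have he : (u - v) ⬝ᵥ A *ᵥ (u - v)
      = u ⬝ᵥ A *ᵥ u - u ⬝ᵥ A *ᵥ v - v ⬝ᵥ A *ᵥ u + v ⬝ᵥ A *ᵥ v := by
    simp only [Matrix.mulVec_sub, dotProduct_sub, sub_dotProduct]
    ring
  linarith

end MatrixCS


lemma exp_neg_sub_le {a b : ℝ} (ha : 0 ≤ a) : Real.exp (-a) - Real.exp (-b) ≤ |a - b| := by
  rcases le_total a b with h | h
  · have h1 : Real.exp (-a) ≤ 1 := Real.exp_le_one_iff.mpr (by linarith)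
    have h2 : a - b + 1 ≤ Real.exp (a - b) := Real.add_one_le_exp _
    have h3 : Real.exp (a - b) ≤ 1 := Real.exp_le_one_iff.mpr (by linarith)
    have h4 : Real.exp (-a) * Real.exp (a - b) = Real.exp (-b) := by
      rw [← Real.exp_add]; ring_nf
    have h5 : |a - b| = b - a := by rw [abs_of_nonpos (by linarith)]; ring
    nlinarith [Real.exp_nonneg (-a)]
  · have h6 : Real.exp (-a) ≤ Real.exp (-b) := Real.exp_le_exp.mpr (by linarith)
    have := abs_nonneg (a - b)
    linarith

lemma posterior_eq_tilted {α : Type*} [MeasurableSpace α] (μ : Measure α) (Φ : α → ℝ) :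
    posterior μ Φ = μ.tilted (fun x => -Φ x) := rfl

lemma KL_posterior_le {α : Type*} [MeasurableSpace α] (μ : Measure α) [IsProbabilityMeasure μ]
    (Φ1 Φ2 : α → ℝ) (h1m : Measurable Φ1) (h2m : Measurable Φ2)
    (h10 : ∀ x, 0 ≤ Φ1 x) (h20 : ∀ x, 0 ≤ Φ2 x)
    (hi1 : Integrable Φ1 μ) (hi2 : Integrable Φ2 μ) :
    KLdiv (posterior μ Φ1) (posterior μ Φ2) ≤
      ENNReal.ofReal (2 * Real.exp ((∫ x, |Φ1 x| ∂μ) + ∫ x, |Φ2 x| ∂μ) *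
        ∫ x, |Φ1 x - Φ2 x| ∂μ) := by
  have hexp1 : Integrable (fun x => Real.exp (-Φ1 x)) μ := by
    refine (integrable_const (1:ℝ)).mono'
      ((measurable_exp.comp h1m.neg).aestronglyMeasurable) (ae_of_all _ fun x => ?_)
    rw [Real.norm_eq_abs, abs_of_pos (Real.exp_pos _)]
    exact Real.exp_le_one_iff.mpr (neg_nonpos.mpr (h10 x))
  have hexp2 : Integrable (fun x => Real.exp (-Φ2 x)) μ := by
    refine (integrable_const (1:ℝ)).mono'
      ((measurable_exp.comp h2m.neg).aestronglyMeasurable) (ae_of_all _ fun x => ?_)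
    rw [Real.norm_eq_abs, abs_of_pos (Real.exp_pos _)]
    exact Real.exp_le_one_iff.mpr (neg_nonpos.mpr (h20 x))
  rw [posterior_eq_tilted μ Φ1, posterior_eq_tilted μ Φ2]
  set Z1 := ∫ x, Real.exp (-Φ1 x) ∂μ with hZ1def
  set Z2 := ∫ x, Real.exp (-Φ2 x) ∂μ with hZ2def
  have hZ1pos : 0 < Z1 := integral_exp_pos hexp1
  have hZ2pos : 0 < Z2 := integral_exp_pos hexp2
  set ν1 := μ.tilted (fun x => -Φ1 x) with hν1def
  set ν2 := μ.tilted (fun x => -Φ2 x) with hν2def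
  haveI hP1 : IsProbabilityMeasure ν1 := isProbabilityMeasure_tilted hexp1
  haveI hP2 : IsProbabilityMeasure ν2 := isProbabilityMeasure_tilted hexp2
  set g : α → ℝ := fun x => Φ2 x - Φ1 x with hgdef
  have hfg : (fun x => -Φ2 x) + g = fun x => -Φ1 x := by
    funext x; simp only [Pi.add_apply, hgdef]; ring
  have hT : ν2.tilted g = ν1 := by
    rw [hν2def, tilted_tilted hexp2, hfg]
  have hgint : Integrable (fun x => Real.exp (g x)) ν2 := by
    rw [hν2def, Measure.tilted,
      integrable_withDensity_iff (by fun_prop) (ae_of_all _ fun x => ofReal_lt_top)]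
    refine (hexp1.div_const Z2).congr (ae_of_all _ fun x => ?_)
    show Real.exp (-Φ1 x) / Z2 = Real.exp (g x) *
      (ENNReal.ofReal (Real.exp (-Φ2 x) / Z2)).toReal
    rw [ENNReal.toReal_ofReal (by positivity), ← mul_div_assoc, ← Real.exp_add]
    congr 2
    simp only [hgdef]
    ring
  have hZg : ∫ x, Real.exp (g x) ∂ν2 = Z1 / Z2 := by
    rw [hν2def, integral_exp_tilted, hfg]
  have hAC : ν1 ≪ ν2 := by
    rw [← hT]; exact tilted_absolutelyContinuous _ _
  have hlogae : (fun x => Real.log ((ν1.rnDeriv ν2) x).toReal)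
      =ᵐ[ν2] fun x => g x - Real.log (Z1/Z2) := by
    have h := log_rnDeriv_tilted_left_self (μ := ν2) (f := g) hgint
    rw [hT, hZg] at h
    exact h
  have hlogae1 : (fun x => Real.log ((ν1.rnDeriv ν2) x).toReal)
      =ᵐ[ν1] fun x => g x - Real.log (Z1/Z2) := hlogae.filter_mono hAC.ae_le
  have hle : ν1 ≤ (ENNReal.ofReal (1/Z1)) • μ := by
    refine Measure.le_intro fun s hs _ => ?_
    rw [hν1def, Measure.tilted, withDensity_apply _ hs]
    calc ∫⁻ x in s, ENNReal.ofReal (Real.exp (-Φ1 x) / Z1) ∂μ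
        ≤ ∫⁻ _ in s, ENNReal.ofReal (1/Z1) ∂μ := by
          refine setLIntegral_mono measurable_const fun x _ => ?_
          refine ENNReal.ofReal_le_ofReal ?_
          gcongr
          exact Real.exp_le_one_iff.mpr (neg_nonpos.mpr (h10 x))
      _ = ENNReal.ofReal (1/Z1) * μ s := setLIntegral_const s _
      _ = ((ENNReal.ofReal (1/Z1)) • μ) s := by simp [Measure.smul_apply]
  have hIntg1 : Integrable g ν1 :=
    ((hi2.sub hi1).smul_measure ofReal_ne_top).mono_measure hle
  have hIntlog : Integrable (fun x => Real.log ((ν1.rnDeriv ν2) x).toReal) ν1 :=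
    (hIntg1.sub (integrable_const (Real.log (Z1/Z2)))).congr hlogae1.symm
  have hKL : KLdiv ν1 ν2 = ENNReal.ofReal ((∫ x, g x ∂ν1) - Real.log (Z1/Z2)) := by
    rw [KLdiv, if_pos ⟨hAC, hIntlog⟩]
    congr 1
    rw [integral_congr_ae hlogae1, integral_sub hIntg1 (integrable_const _),
      integral_const]
    simp
  rw [hKL]
  set D := ∫ x, |Φ1 x - Φ2 x| ∂μ with hDdef
  have hD0 : 0 ≤ D := integral_nonneg fun x => abs_nonneg _
  set E := Real.exp ((∫ x, |Φ1 x| ∂μ) + ∫ x, |Φ2 x| ∂μ) with hEdef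
  -- Jensen
  have hJ1 : Real.exp (-(∫ x, |Φ1 x| ∂μ)) ≤ Z1 := by
    have hneg : ∫ x, -Φ1 x ∂μ = -(∫ x, |Φ1 x| ∂μ) := by
      rw [integral_neg, neg_inj]
      exact integral_congr_ae (ae_of_all _ fun x => (abs_of_nonneg (h10 x)).symm)
    have hj : Real.exp (∫ x, -Φ1 x ∂μ) ≤ ∫ x, Real.exp (-Φ1 x) ∂μ :=
      convexOn_exp.map_integral_le (μ := μ) (f := fun x => -Φ1 x)
        continuous_exp.continuousOn isClosed_univ
        (ae_of_all _ fun x => Set.mem_univ _) hi1.neg hexp1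
    rw [hneg] at hj
    exact hj
  have claim3 : 1/Z1 ≤ E := by
    have h1 : 1/Z1 ≤ 1/Real.exp (-(∫ x, |Φ1 x| ∂μ)) := by
      gcongr
    rw [one_div (Real.exp _), ← Real.exp_neg, neg_neg] at h1
    refine h1.trans ?_
    rw [hEdef]
    exact Real.exp_le_exp.mpr
      (le_add_of_nonneg_right (integral_nonneg fun x => abs_nonneg _))
  have claim0 : ∫ x, |g x| ∂ν1 ≤ (1/Z1) * D := by
    have hint_abs : Integrable (fun x => |g x|) ((ENNReal.ofReal (1/Z1)) • μ) :=
      ((hi2.sub hi1).abs).smul_measure ofReal_ne_top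
    have h1 : ∫ x, |g x| ∂ν1 ≤ ∫ x, |g x| ∂((ENNReal.ofReal (1/Z1)) • μ) :=
      integral_mono_measure hle (ae_of_all _ fun x => abs_nonneg _) hint_abs
    have h2 : ∫ x, |g x| ∂((ENNReal.ofReal (1/Z1)) • μ) = (1/Z1) * ∫ x, |g x| ∂μ := by
      rw [integral_smul_measure, ENNReal.toReal_ofReal (by positivity), smul_eq_mul]
    have h3 : ∫ x, |g x| ∂μ = D := by
      rw [hDdef]
      exact integral_congr_ae (ae_of_all _ fun x => abs_sub_comm _ _)
    rw [h2, h3] at h1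
    exact h1
  have claim1 : ∫ x, g x ∂ν1 ≤ (1/Z1) * D :=
    (integral_mono hIntg1 hIntg1.abs fun x => le_abs_self _).trans claim0
  have claim2 : -Real.log (Z1/Z2) ≤ (1/Z1) * D := by
    have hZdiff : Z2 - Z1 ≤ D := by
      have he : Z2 - Z1 = ∫ x, (Real.exp (-Φ2 x) - Real.exp (-Φ1 x)) ∂μ :=
        (integral_sub hexp2 hexp1).symm
      rw [he, hDdef]
      refine integral_mono (hexp2.sub hexp1) ((hi1.sub hi2).abs) fun x => ?_
      calc Real.exp (-Φ2 x) - Real.exp (-Φ1 x) ≤ |Φ2 x - Φ1 x| := exp_neg_sub_le (h20 x)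
        _ = |Φ1 x - Φ2 x| := abs_sub_comm _ _
    have e1 : -Real.log (Z1/Z2) = Real.log (Z2/Z1) := by
      rw [← Real.log_inv, inv_div]
    rw [e1]
    calc Real.log (Z2/Z1) ≤ Z2/Z1 - 1 :=
        Real.log_le_sub_one_of_pos (by positivity)
      _ = (Z2 - Z1)/Z1 := by field_simp
      _ ≤ D / Z1 := by gcongr
      _ = (1/Z1) * D := by ring
  refine ENNReal.ofReal_le_ofReal ?_
  have h4 : (1/Z1) * D ≤ E * D := mul_le_mul_of_nonneg_right claim3 hD0
  calc (∫ x, g x ∂ν1) - Real.log (Z1/Z2) ≤ (1/Z1) * D + (1/Z1) * D := by linarith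
    _ ≤ E * D + E * D := by linarith
    _ = 2 * E * D := by ring


lemma integrable_exp_neg {α : Type*} [MeasurableSpace α] {μ : Measure α} [IsFiniteMeasure μ]
    {Φ : α → ℝ} (hm : Measurable Φ) (h0 : ∀ x, 0 ≤ Φ x) :
    Integrable (fun x => Real.exp (-Φ x)) μ := by
  refine (integrable_const (1:ℝ)).mono'
    ((measurable_exp.comp hm.neg).aestronglyMeasurable) (ae_of_all _ fun x => ?_)
  rw [Real.norm_eq_abs, abs_of_pos (Real.exp_pos _)]
  exact Real.exp_le_one_iff.mpr (neg_nonpos.mpr (h0 x))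

lemma isProbabilityMeasure_posterior {α : Type*} [MeasurableSpace α] (μ : Measure α)
    [IsProbabilityMeasure μ] {Φ : α → ℝ} (hm : Measurable Φ) (h0 : ∀ x, 0 ≤ Φ x) :
    IsProbabilityMeasure (posterior μ Φ) := by
  rw [posterior_eq_tilted]
  exact isProbabilityMeasure_tilted (integrable_exp_neg hm h0)

section Prod
variable {X W : Type*} [MeasurableSpace X] [MeasurableSpace W]
  (μθ : Measure X) [IsProbabilityMeasure μθ] (μδ : Measure W) [IsProbabilityMeasure μδ]

omit [IsProbabilityMeasure μθ] in
lemma map_fst_prod_eq : (μθ.prod μδ).map Prod.fst = μθ := by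
  rw [Measure.map_fst_prod]; simp

lemma integrable_comp_fst {f : X → ℝ} (hf : Integrable f μθ) :
    Integrable (fun p : X × W => f p.1) (μθ.prod μδ) := by
  have hmap := map_fst_prod_eq μθ μδ
  have h : Integrable f ((μθ.prod μδ).map Prod.fst) := by rwa [hmap]
  exact h.comp_measurable measurable_fst

lemma integral_comp_fst {f : X → ℝ} (hfm : AEStronglyMeasurable f μθ) :
    ∫ p, f p.1 ∂(μθ.prod μδ) = ∫ x, f x ∂μθ := by
  have hmap := map_fst_prod_eq μθ μδ
  conv_rhs => rw [← hmap]
  rw [integral_map measurable_fst.aemeasurable (by rwa [hmap])]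

lemma prod_posterior {Φ : X → ℝ} (hm : Measurable Φ) (h0 : ∀ x, 0 ≤ Φ x)
    (hi : Integrable Φ μθ) :
    (posterior μθ Φ).prod μδ = posterior (μθ.prod μδ) (fun p => Φ p.1) := by
  haveI := isProbabilityMeasure_posterior μθ hm h0
  have hZeq : (∫ p, Real.exp (-Φ (p : X × W).1) ∂(μθ.prod μδ)) = ∫ x, Real.exp (-Φ x) ∂μθ :=
    integral_comp_fst μθ μδ (integrable_exp_neg hm h0).1
  have hd : Measurable fun x => ENNReal.ofReal (Real.exp (-Φ x) / ∫ x', Real.exp (-Φ x') ∂μθ) :=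
    ((measurable_exp.comp hm.neg).div_const _).ennreal_ofReal
  refine Measure.prod_eq (μ := posterior μθ Φ) (ν := μδ) fun s t hs ht => ?_
  rw [posterior, withDensity_apply _ (hs.prod ht)]
  simp_rw [hZeq]
  rw [← Measure.prod_restrict s t]
  have hd2 : Measurable fun p : X × W =>
      ENNReal.ofReal (Real.exp (-Φ p.1) / ∫ x', Real.exp (-Φ x') ∂μθ) :=
    hd.comp measurable_fst
  rw [lintegral_prod _ hd2.aemeasurable]
  simp only [lintegral_const, Measure.restrict_apply_univ]
  rw [lintegral_mul_const _ hd, posterior, withDensity_apply _ hs]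

end Prod

lemma CS_int {α : Type*} [MeasurableSpace α] {μ : Measure α} {f g : α → ℝ}
    (hfm : Measurable f) (hgm : Measurable g) (hf0 : ∀ x, 0 ≤ f x) (hg0 : ∀ x, 0 ≤ g x)
    (hfi : Integrable f μ) (hgi : Integrable g μ) :
    ∫ x, Real.sqrt (f x) * Real.sqrt (g x) ∂μ ≤
      Real.sqrt (∫ x, f x ∂μ) * Real.sqrt (∫ x, g x ∂μ) := by
  have hpq : Real.HolderConjugate 2 2 := Real.HolderConjugate.two_two
  have h2 : (ENNReal.ofReal (2:ℝ)) = 2 := by norm_num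
  have hmemf : MemLp (fun x => Real.sqrt (f x)) (ENNReal.ofReal (2:ℝ)) μ := by
    rw [h2, memLp_two_iff_integrable_sq (hfm.sqrt.aestronglyMeasurable)]
    exact hfi.congr (ae_of_all _ fun x => (Real.sq_sqrt (hf0 x)).symm)
  have hmemg : MemLp (fun x => Real.sqrt (g x)) (ENNReal.ofReal (2:ℝ)) μ := by
    rw [h2, memLp_two_iff_integrable_sq (hgm.sqrt.aestronglyMeasurable)]
    exact hgi.congr (ae_of_all _ fun x => (Real.sq_sqrt (hg0 x)).symm)
  have h := integral_mul_le_Lp_mul_Lq_of_nonneg hpq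
    (ae_of_all _ fun x => Real.sqrt_nonneg (f x))
    (ae_of_all _ fun x => Real.sqrt_nonneg (g x)) hmemf hmemg
  have ef : ∫ x, Real.sqrt (f x) ^ (2:ℝ) ∂μ = ∫ x, f x ∂μ := by
    refine integral_congr_ae (ae_of_all _ fun x => ?_)
    show Real.sqrt (f x) ^ (2:ℝ) = f x
    rw [show ((2:ℝ)) = ((2:ℕ):ℝ) by norm_num, Real.rpow_natCast, Real.sq_sqrt (hf0 x)]
  have eg : ∫ x, Real.sqrt (g x) ^ (2:ℝ) ∂μ = ∫ x, g x ∂μ := by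
    refine integral_congr_ae (ae_of_all _ fun x => ?_)
    show Real.sqrt (g x) ^ (2:ℝ) = g x
    rw [show ((2:ℝ)) = ((2:ℕ):ℝ) by norm_num, Real.rpow_natCast, Real.sq_sqrt (hg0 x)]
  rw [ef, eg] at h
  rw [Real.sqrt_eq_rpow, Real.sqrt_eq_rpow]
  exact h


theorem stmt13 {X W U : Type*} [MeasurableSpace X] [MeasurableSpace W]
    [NormedAddCommGroup U] [NormedSpace ℝ U] [CompleteSpace U]
    [MeasurableSpace U] [BorelSpace U]
    (μθ : Measure X) [IsProbabilityMeasure μθ] (μδ : Measure W) [IsProbabilityMeasure μδ]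
    {n : ℕ}
    (Mappr : X → U) (hMappr : Measurable Mappr)
    (e : X × W → U) (he : Measurable e)
    (O : U →L[ℝ] (Fin n → ℝ)) (y : Fin n → ℝ)
    (Γ : Matrix (Fin n) (Fin n) ℝ) (hΓ : Γ.PosDef)
    (Φappr : X → ℝ) (Φjoint : X × W → ℝ)
    (hΦappr : Φappr = fun θ => (1/2) * ((y - O (Mappr θ)) ⬝ᵥ (Γ⁻¹ *ᵥ (y - O (Mappr θ)))))
    (hΦjoint : Φjoint = fun p => (1/2) *
      ((y - O (Mappr p.1) - O (e p)) ⬝ᵥ (Γ⁻¹ *ᵥ (y - O (Mappr p.1) - O (e p)))))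
    (hia : Integrable Φappr μθ) (hij : Integrable Φjoint (μθ.prod μδ)) :
    max (KLdiv ((posterior μθ Φappr).prod μδ) (posterior (μθ.prod μδ) Φjoint))
        (KLdiv (posterior (μθ.prod μδ) Φjoint) ((posterior μθ Φappr).prod μδ)) ≤
      ENNReal.ofReal
        ((Real.sqrt 2 *
            Real.exp (2 * (∫ p, |Φjoint p| ∂(μθ.prod μδ)) + 2 * ∫ θ, |Φappr θ| ∂μθ) *
            (Real.sqrt (∫ p, |Φjoint p| ∂(μθ.prod μδ)) + Real.sqrt (∫ θ, |Φappr θ| ∂μθ))) *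
          Real.sqrt (∫ p, |(O (e p)) ⬝ᵥ (Γ⁻¹ *ᵥ (O (e p)))| ∂(μθ.prod μδ))) := by
  classical
  set A := Γ⁻¹ with hAdef
  have hA : A.PosSemidef := hΓ.inv.posSemidef
  have hqc : Continuous fun v : Fin n → ℝ => v ⬝ᵥ A *ᵥ v := cont_q A
  have ham : Measurable fun θ => y - O (Mappr θ) :=
    measurable_const.sub (O.continuous.measurable.comp hMappr)
  have hbm : Measurable fun p : X × W => y - O (Mappr p.1) - O (e p) :=
    (measurable_const.sub (O.continuous.measurable.comp (hMappr.comp measurable_fst))).sub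
      (O.continuous.measurable.comp he)
  have hOem : Measurable fun p : X × W => O (e p) := O.continuous.measurable.comp he
  have hΦam : Measurable Φappr := by
    rw [hΦappr]; exact (hqc.measurable.comp ham).const_mul _
  have hΦjm : Measurable Φjoint := by
    rw [hΦjoint]; exact (hqc.measurable.comp hbm).const_mul _
  have hΦa0 : ∀ θ, 0 ≤ Φappr θ := fun θ => by
    rw [hΦappr]; exact mul_nonneg (by norm_num) (q_nonneg A hA _)
  have hΦj0 : ∀ p, 0 ≤ Φjoint p := fun p => by
    rw [hΦjoint]; exact mul_nonneg (by norm_num) (q_nonneg A hA _)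
  set Φt : X × W → ℝ := fun p => Φappr p.1 with hΦtdef
  have hΦtm : Measurable Φt := hΦam.comp measurable_fst
  have hΦt0 : ∀ p, 0 ≤ Φt p := fun p => hΦa0 p.1
  have hit : Integrable Φt (μθ.prod μδ) := integrable_comp_fst μθ μδ hia
  have hprodpost : (posterior μθ Φappr).prod μδ = posterior (μθ.prod μδ) Φt :=
    prod_posterior μθ μδ hΦam hΦa0 hia
  have hyA : (∫ p, |Φt p| ∂(μθ.prod μδ)) = ∫ θ, |Φappr θ| ∂μθ :=
    integral_comp_fst μθ μδ (f := fun θ => |Φappr θ|) hΦam.abs.aestronglyMeasurable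
  -- abbreviations
  set xJ := ∫ p, |Φjoint p| ∂(μθ.prod μδ) with hxJdef
  set yA := ∫ θ, |Φappr θ| ∂μθ with hyAdef
  have hx0 : 0 ≤ xJ := integral_nonneg fun p => abs_nonneg _
  have hy0 : 0 ≤ yA := integral_nonneg fun θ => abs_nonneg _
  set D := ∫ p, |Φt p - Φjoint p| ∂(μθ.prod μδ) with hDdef
  -- pointwise bound
  have hqOe : ∀ p : X × W, (O (e p)) ⬝ᵥ A *ᵥ (O (e p)) ≤ 4 * Φt p + 4 * Φjoint p := by
    intro p
    have heq : O (e p) = (y - O (Mappr p.1)) - (y - O (Mappr p.1) - O (e p)) := by abel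
    have h := q_sub_le A hA (y - O (Mappr p.1)) (y - O (Mappr p.1) - O (e p))
    rw [← heq] at h
    have e1 : Φt p = 1/2 * ((y - O (Mappr p.1)) ⬝ᵥ A *ᵥ (y - O (Mappr p.1))) := by
      show Φappr p.1 = _; rw [hΦappr]
    have e2 : Φjoint p = 1/2 *
        ((y - O (Mappr p.1) - O (e p)) ⬝ᵥ A *ᵥ (y - O (Mappr p.1) - O (e p))) := by
      rw [hΦjoint]
    rw [e1, e2]; linarith
  have hpt : ∀ p : X × W, |Φt p - Φjoint p| ≤
      Real.sqrt 2 / 2 * (Real.sqrt ((O (e p)) ⬝ᵥ A *ᵥ (O (e p))) * Real.sqrt (Φt p) +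
        Real.sqrt ((O (e p)) ⬝ᵥ A *ᵥ (O (e p))) * Real.sqrt (Φjoint p)) := by
    intro p
    have e1 : Φt p = 1/2 * ((y - O (Mappr p.1)) ⬝ᵥ A *ᵥ (y - O (Mappr p.1))) := by
      show Φappr p.1 = _; rw [hΦappr]
    have e2 : Φjoint p = 1/2 *
        (((y - O (Mappr p.1)) - O (e p)) ⬝ᵥ A *ᵥ ((y - O (Mappr p.1)) - O (e p))) := by
      rw [hΦjoint]
    have h := key_pt A hA (y - O (Mappr p.1)) (O (e p))
    have habs : |Φt p - Φjoint p| =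
        |1/2 * (((y - O (Mappr p.1)) - O (e p)) ⬝ᵥ A *ᵥ ((y - O (Mappr p.1)) - O (e p))) -
         1/2 * ((y - O (Mappr p.1)) ⬝ᵥ A *ᵥ (y - O (Mappr p.1)))| := by
      rw [e1, e2, abs_sub_comm]
    rw [habs]
    refine h.trans (le_of_eq ?_)
    have q1 : (y - O (Mappr p.1)) ⬝ᵥ A *ᵥ (y - O (Mappr p.1)) = 2 * Φt p := by
      rw [e1]; ring
    have q2 : ((y - O (Mappr p.1)) - O (e p)) ⬝ᵥ A *ᵥ ((y - O (Mappr p.1)) - O (e p))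
        = 2 * Φjoint p := by rw [e2]; ring
    rw [q1, q2, Real.sqrt_mul (by norm_num : (0:ℝ) ≤ 2) (Φt p),
      Real.sqrt_mul (by norm_num : (0:ℝ) ≤ 2) (Φjoint p)]
    ring
  -- integrability of the quadratic error term
  have hQm : Measurable fun p : X × W => (O (e p)) ⬝ᵥ A *ᵥ (O (e p)) :=
    hqc.measurable.comp hOem
  have hQint : Integrable (fun p => (O (e p)) ⬝ᵥ A *ᵥ (O (e p))) (μθ.prod μδ) := by
    refine Integrable.mono' ((hit.const_mul 4).add (hij.const_mul 4))
      hQm.aestronglyMeasurable (ae_of_all _ fun p => ?_)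
    rw [Real.norm_eq_abs, abs_of_nonneg (q_nonneg A hA _)]
    exact hqOe p
  have hQ0 : ∀ p : X × W, 0 ≤ (O (e p)) ⬝ᵥ A *ᵥ (O (e p)) := fun p => q_nonneg A hA _
  -- products of square roots are integrable
  have hFG1 : Integrable (fun p => Real.sqrt ((O (e p)) ⬝ᵥ A *ᵥ (O (e p))) *
      Real.sqrt (Φt p)) (μθ.prod μδ) := by
    refine Integrable.mono' ((hQint.add hit).const_mul (1/2))
      (hQm.sqrt.mul hΦtm.sqrt).aestronglyMeasurable (ae_of_all _ fun p => ?_)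
    rw [Real.norm_eq_abs, abs_of_nonneg (mul_nonneg (Real.sqrt_nonneg _) (Real.sqrt_nonneg _))]
    have h1 : Real.sqrt ((O (e p)) ⬝ᵥ A *ᵥ (O (e p))) ^ 2 = (O (e p)) ⬝ᵥ A *ᵥ (O (e p)) :=
      Real.sq_sqrt (hQ0 p)
    have h2 : Real.sqrt (Φt p) ^ 2 = Φt p := Real.sq_sqrt (hΦt0 p)
    simp only [Pi.add_apply]
    nlinarith [sq_nonneg (Real.sqrt ((O (e p)) ⬝ᵥ A *ᵥ (O (e p))) - Real.sqrt (Φt p))]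
  have hFG2 : Integrable (fun p => Real.sqrt ((O (e p)) ⬝ᵥ A *ᵥ (O (e p))) *
      Real.sqrt (Φjoint p)) (μθ.prod μδ) := by
    refine Integrable.mono' ((hQint.add hij).const_mul (1/2))
      (hQm.sqrt.mul hΦjm.sqrt).aestronglyMeasurable (ae_of_all _ fun p => ?_)
    rw [Real.norm_eq_abs, abs_of_nonneg (mul_nonneg (Real.sqrt_nonneg _) (Real.sqrt_nonneg _))]
    have h1 : Real.sqrt ((O (e p)) ⬝ᵥ A *ᵥ (O (e p))) ^ 2 = (O (e p)) ⬝ᵥ A *ᵥ (O (e p)) :=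
      Real.sq_sqrt (hQ0 p)
    have h2 : Real.sqrt (Φjoint p) ^ 2 = Φjoint p := Real.sq_sqrt (hΦj0 p)
    simp only [Pi.add_apply]
    nlinarith [sq_nonneg (Real.sqrt ((O (e p)) ⬝ᵥ A *ᵥ (O (e p))) - Real.sqrt (Φjoint p))]
  -- Cauchy-Schwarz bounds
  set Q := ∫ p, |(O (e p)) ⬝ᵥ A *ᵥ (O (e p))| ∂(μθ.prod μδ) with hQdef
  have hQeq : (∫ p, (O (e p)) ⬝ᵥ A *ᵥ (O (e p)) ∂(μθ.prod μδ)) = Q := by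
    rw [hQdef]
    exact integral_congr_ae (ae_of_all _ fun p => (abs_of_nonneg (hQ0 p)).symm)
  have hYt : (∫ p, Φt p ∂(μθ.prod μδ)) = yA := by
    rw [← hyA]
    exact integral_congr_ae (ae_of_all _ fun p => (abs_of_nonneg (hΦt0 p)).symm)
  have hXj : (∫ p, Φjoint p ∂(μθ.prod μδ)) = xJ := by
    rw [hxJdef]
    exact integral_congr_ae (ae_of_all _ fun p => (abs_of_nonneg (hΦj0 p)).symm)
  have hCS1 : (∫ p, Real.sqrt ((O (e p)) ⬝ᵥ A *ᵥ (O (e p))) * Real.sqrt (Φt p)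
      ∂(μθ.prod μδ)) ≤ Real.sqrt Q * Real.sqrt yA := by
    have h := CS_int hQm hΦtm hQ0 hΦt0 hQint hit
    rwa [hQeq, hYt] at h
  have hCS2 : (∫ p, Real.sqrt ((O (e p)) ⬝ᵥ A *ᵥ (O (e p))) * Real.sqrt (Φjoint p)
      ∂(μθ.prod μδ)) ≤ Real.sqrt Q * Real.sqrt xJ := by
    have h := CS_int hQm hΦjm hQ0 hΦj0 hQint hij
    rwa [hQeq, hXj] at h
  -- bound on D
  have hD : D ≤ Real.sqrt 2 / 2 * (Real.sqrt Q * Real.sqrt yA + Real.sqrt Q * Real.sqrt xJ) := by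
    have h1 : D ≤ ∫ p, Real.sqrt 2 / 2 *
        (Real.sqrt ((O (e p)) ⬝ᵥ A *ᵥ (O (e p))) * Real.sqrt (Φt p) +
         Real.sqrt ((O (e p)) ⬝ᵥ A *ᵥ (O (e p))) * Real.sqrt (Φjoint p)) ∂(μθ.prod μδ) := by
      rw [hDdef]
      exact integral_mono ((hit.sub hij).abs) ((hFG1.add hFG2).const_mul _) hpt
    have h2 : (∫ p, Real.sqrt 2 / 2 *
        (Real.sqrt ((O (e p)) ⬝ᵥ A *ᵥ (O (e p))) * Real.sqrt (Φt p) +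
         Real.sqrt ((O (e p)) ⬝ᵥ A *ᵥ (O (e p))) * Real.sqrt (Φjoint p)) ∂(μθ.prod μδ))
        = Real.sqrt 2 / 2 *
          ((∫ p, Real.sqrt ((O (e p)) ⬝ᵥ A *ᵥ (O (e p))) * Real.sqrt (Φt p) ∂(μθ.prod μδ)) +
           ∫ p, Real.sqrt ((O (e p)) ⬝ᵥ A *ᵥ (O (e p))) * Real.sqrt (Φjoint p) ∂(μθ.prod μδ)) := by
      rw [integral_const_mul, integral_add hFG1 hFG2]
    rw [h2] at h1
    refine h1.trans ?_
    have := add_le_add hCS1 hCS2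
    nlinarith [Real.sqrt_nonneg 2]
  -- the two KL bounds
  have hb1 := KL_posterior_le (μθ.prod μδ) Φt Φjoint hΦtm hΦjm hΦt0 hΦj0 hit hij
  have hb2 := KL_posterior_le (μθ.prod μδ) Φjoint Φt hΦjm hΦtm hΦj0 hΦt0 hij hit
  rw [hyA] at hb1 hb2
  have hDcomm : (∫ p, |Φjoint p - Φt p| ∂(μθ.prod μδ)) = D := by
    rw [hDdef]
    exact integral_congr_ae (ae_of_all _ fun p => abs_sub_comm _ _)
  rw [hDcomm] at hb2
  -- final real inequality
  have hfinal : 2 * Real.exp (yA + xJ) * D ≤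
      Real.sqrt 2 * Real.exp (2 * xJ + 2 * yA) * (Real.sqrt xJ + Real.sqrt yA) *
        Real.sqrt Q := by
    have hE : Real.exp (yA + xJ) ≤ Real.exp (2 * xJ + 2 * yA) :=
      Real.exp_le_exp.mpr (by linarith)
    have hD0 : 0 ≤ D := integral_nonneg fun p => abs_nonneg _
    calc 2 * Real.exp (yA + xJ) * D
        ≤ 2 * Real.exp (yA + xJ) *
          (Real.sqrt 2 / 2 * (Real.sqrt Q * Real.sqrt yA + Real.sqrt Q * Real.sqrt xJ)) := by
          have h := mul_le_mul_of_nonneg_left hD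
            (by positivity : (0:ℝ) ≤ 2 * Real.exp (yA + xJ))
          exact h
      _ = Real.sqrt 2 * Real.exp (yA + xJ) * (Real.sqrt xJ + Real.sqrt yA) * Real.sqrt Q := by
          ring
      _ ≤ Real.sqrt 2 * Real.exp (2 * xJ + 2 * yA) * (Real.sqrt xJ + Real.sqrt yA) *
          Real.sqrt Q := by
          have h1 : (0:ℝ) ≤ Real.sqrt xJ + Real.sqrt yA := by positivity
          have h2 : (0:ℝ) ≤ Real.sqrt Q := Real.sqrt_nonneg _
          have h3 : (0:ℝ) ≤ Real.sqrt 2 := Real.sqrt_nonneg _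
          nlinarith [mul_le_mul_of_nonneg_left hE h3]
  rw [hprodpost]
  refine max_le (hb1.trans ?_) (hb2.trans ?_)
  · refine ENNReal.ofReal_le_ofReal ?_
    calc 2 * Real.exp (yA + xJ) * ∫ p, |Φt p - Φjoint p| ∂(μθ.prod μδ)
        = 2 * Real.exp (yA + xJ) * D := by rw [hDdef]
      _ ≤ _ := hfinal
  · refine ENNReal.ofReal_le_ofReal ?_
    calc 2 * Real.exp (xJ + yA) * D = 2 * Real.exp (yA + xJ) * D := by rw [add_comm xJ yA]
      _ ≤ _ := hfinal
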